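/- Let η, λ be real numbers with sin(2η) ≠ 0, sin(λ−η) ≠ 0 and sin(λ−3η) ≠ 0, and set μ = λ − 5η. Then for every nonzero real σ: (i) the denominator σ·sin(λ−η)·sin((λ−η−μ)/2) − sin(λ+η)·sin((λ−5η−μ)/2) equals σ·sin(λ−η)·sin(2η) and is nonzero; (ii) g(σ) := σ·sin(2η)·sin((λ+3η+μ)/2) / (σ·sin(λ−η)·sin((λ−η−μ)/2) − sin(λ+η)·sin((λ−5η−μ)/2)) equals 1; and (iii) τ(σ) := σ·(σ·sin(λ−η)·sin((λ+3η−μ)/2) − sin(λ+η)·sin((λ−η−μ)/2)) / (σ·sin(λ−η)·sin((λ−η−μ)/2) − sin(λ+η)·sin((λ−5η−μ)/2)) · sin((λ+3η+μ)/2)/sin((λ−η+μ)/2) equals (2cos(2η)·sin(λ−η)·σ − sin(λ+η)) / sin(λ−3η). -/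

import Mathlib

/-- At μ = λ − 5η the correction factor g(σ) is 1 and τ(σ) is affine in σ. -/
theorem stmt3 (η lam μ : ℝ)
    (h1 : Real.sin (2*η) ≠ 0) (h2 : Real.sin (lam - η) ≠ 0) (h3 : Real.sin (lam - 3*η) ≠ 0)
    (hμ : μ = lam - 5*η) (σ : ℝ) (hσ : σ ≠ 0)
    (D : ℝ) (hD : D = σ * Real.sin (lam - η) * Real.sin ((lam - η - μ)/2)
        - Real.sin (lam + η) * Real.sin ((lam - 5*η - μ)/2)) :
    D = σ * Real.sin (lam - η) * Real.sin (2*η) ∧ D ≠ 0 ∧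
    σ * Real.sin (2*η) * Real.sin ((lam + 3*η + μ)/2) / D = 1 ∧
    σ * (σ * Real.sin (lam - η) * Real.sin ((lam + 3*η - μ)/2)
        - Real.sin (lam + η) * Real.sin ((lam - η - μ)/2)) / D
      * (Real.sin ((lam + 3*η + μ)/2) / Real.sin ((lam - η + μ)/2))
      = (2 * Real.cos (2*η) * Real.sin (lam - η) * σ - Real.sin (lam + η))
        / Real.sin (lam - 3*η) := by
  subst hμ
  have e1 : (lam - η - (lam - 5*η))/2 = 2*η := by ring
  have e2 : (lam - 5*η - (lam - 5*η))/2 = 0 := by ring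
  have e3 : (lam + 3*η + (lam - 5*η))/2 = lam - η := by ring
  have e4 : (lam + 3*η - (lam - 5*η))/2 = 2*(2*η) := by ring
  have e5 : (lam - η + (lam - 5*η))/2 = lam - 3*η := by ring
  rw [e1, e2, Real.sin_zero, mul_zero, sub_zero] at hD
  have e4' : Real.sin ((lam + 3*η - (lam - 5*η))/2) = 2 * Real.sin (2*η) * Real.cos (2*η) := by
    rw [e4, Real.sin_two_mul]
  rw [e3, e4', e5]
  subst hD
  have hDne : σ * Real.sin (lam - η) * Real.sin (2*η) ≠ 0 := by
    exact mul_ne_zero (mul_ne_zero hσ h2) h1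
  refine ⟨rfl, hDne, ?_, ?_⟩
  · field_simp
  · have h1' : Real.sin (η*2) ≠ 0 := by rwa [mul_comm]
    field_simp
    ring
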